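/- Let u_j solve the system u'_j = μ u_j + λ_s[j(1 - k_s/(j+1)) u_{j+1} - (j-1) u_j] (u_{n+1} ≡ 0, u_n(0)=n, u_j(0)=0 for j<n) and let z_s = Σ_{j=1}^n u_j(s)/j. Then z satisfies z'_s = μ z_s + (1 - k_s) λ_s (z_s - u_1(s)) with z_0 = 1. -/

import Mathlib

lemma z_key_sum (μ l k : ℝ) (a : ℕ → ℝ) :
    ∀ n, 1 ≤ n →
    ∑ j ∈ Finset.Icc 1 n,
        (μ * a j + l * ((j : ℝ) * (1 - k / ((j : ℝ) + 1)) * a (j + 1)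
          - ((j : ℝ) - 1) * a j)) / (j : ℝ)
    = μ * (∑ j ∈ Finset.Icc 1 n, a j / j)
      + l * (a (n + 1) - a 1
        - k * ((∑ j ∈ Finset.Icc 1 n, a j / j) - a 1 + a (n + 1) / ((n : ℝ) + 1))
        + (∑ j ∈ Finset.Icc 1 n, a j / j)) := by
  intro n hn
  induction n, hn using Nat.le_induction with
  | base =>
    simp only [Finset.Icc_self, Finset.sum_singleton]
    push_cast
    ring
  | succ n hn ih =>
    rw [Finset.sum_Icc_succ_top (by omega),
      Finset.sum_Icc_succ_top (by omega) (f := fun j => a j / (j : ℝ)), ih]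
    have h1 : ((n : ℝ) + 1) ≠ 0 := by positivity
    have h2 : ((n : ℝ) + 2) ≠ 0 := by positivity
    push_cast
    field_simp
    ring

/-- If the `u_j` solve the triangular system, then
`z_s = Σ_{j=1}^n u_j(s)/j` satisfies `z' = μ z + (1-k) λ (z - u_1)`, `z 0 = 1`. -/
theorem z_dynamics_from_u_system
    (T μ : ℝ) (hT : 0 ≤ T) (n : ℕ) (hn : 1 ≤ n)
    (l : ℝ → ℝ) (hl : Continuous l) (hl0 : ∀ t, 0 ≤ l t)
    (k : ℝ → ℝ) (hk : Continuous k) (hkb : ∀ t, 0 ≤ k t ∧ k t ≤ 1)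
    (u : ℕ → ℝ → ℝ)
    (htop : ∀ s, u (n + 1) s = 0)
    (hinit : u n 0 = n) (hinit' : ∀ j < n, u j 0 = 0)
    (hode : ∀ j, 1 ≤ j → j ≤ n → ∀ s ∈ Set.Icc 0 T,
      HasDerivAt (u j)
        (μ * u j s + l s * ((j : ℝ) * (1 - k s / (j + 1)) * u (j + 1) s
          - ((j : ℝ) - 1) * u j s)) s)
    (z : ℝ → ℝ) (hz : ∀ s, z s = ∑ j ∈ Finset.Icc 1 n, u j s / j) :
    z 0 = 1 ∧
    ∀ s ∈ Set.Icc 0 T,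
      HasDerivAt z (μ * z s + (1 - k s) * l s * (z s - u 1 s)) s := by
  constructor
  · rw [hz, Finset.sum_eq_single n]
    · rw [hinit]
      have : (n : ℝ) ≠ 0 := by positivity
      field_simp
    · intro j hj hjn
      have hjlt : j < n := lt_of_le_of_ne (Finset.mem_Icc.mp hj).2 hjn
      rw [hinit' j hjlt, zero_div]
    · intro h
      exact absurd (Finset.mem_Icc.mpr ⟨hn, le_refl n⟩) h
  · intro s hs
    have hzf : z = fun t => ∑ j ∈ Finset.Icc 1 n, u j t / j := funext hz
    have hd : HasDerivAt z (∑ j ∈ Finset.Icc 1 n,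
        (μ * u j s + l s * ((j : ℝ) * (1 - k s / (j + 1)) * u (j + 1) s
          - ((j : ℝ) - 1) * u j s)) / (j : ℝ)) s := by
      rw [hzf]
      exact HasDerivAt.fun_sum fun j hj =>
        (hode j (Finset.mem_Icc.mp hj).1 (Finset.mem_Icc.mp hj).2 s hs).div_const (j : ℝ)
    convert hd using 1
    rw [z_key_sum (l := l s) (k := k s) (a := fun j => u j s) μ n hn, htop s, hz]
    ring
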